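/- Let (A,d) be a dg-algebra such that the set of left regular homogeneous elements of ker(d) coincides with the set of right regular homogeneous elements of ker(d), and suppose (A,d) is a graded commutative dg-division algebra. Then either ker(d) is a field concentrated in degree 0, or ker(d) = K[X,X^{-1}] for some field K and a homogeneous element X of nonzero degree; and if K has characteristic different from 2, then X has even degree. -/

import Mathlib

open scoped TensorProduct

section DGCore

variable {A : Type} [Ring A] {B : Type} [Ring B]

/-- `(A, d)` together with the grading `𝒜` is a differential graded ring:
`d` is a square-zero additive endomorphism of degree `1` satisfying the graded
Leibniz rule. -/
structure IsDGRing (𝒜 : ℤ → AddSubgroup A) (d : A →+ A) : Prop where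
  d_sq : ∀ x, d (d x) = 0
  d_mem : ∀ (i : ℤ), ∀ x ∈ 𝒜 i, d x ∈ 𝒜 (i + 1)
  leibniz : ∀ (i : ℤ) (a b : A), a ∈ 𝒜 i →
    d (a * b) = d a * b + ((Int.negOnePow i : ℤ)) • (a * d b)

/-- A homomorphism of differential graded rings (a dg-extension). -/
structure IsDGHom (𝒜 : ℤ → AddSubgroup A) (dA : A →+ A)
    (𝒝 : ℤ → AddSubgroup B) (dB : B →+ B) (φ : A →+* B) : Prop where
  map_mem : ∀ (i : ℤ), ∀ x ∈ 𝒜 i, φ x ∈ 𝒝 i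
  map_d : ∀ x, φ (dA x) = dB (φ x)

/-- Graded commutativity: `a * b = (-1)^{|a||b|} b * a` for homogeneous elements. -/
def IsGradedComm (𝒜 : ℤ → AddSubgroup A) : Prop :=
  ∀ (i j : ℤ) (a b : A), a ∈ 𝒜 i → b ∈ 𝒜 j →
    a * b = ((Int.negOnePow (i * j) : ℤ)) • (b * a)

/-- A dg-ring is acyclic if its homology vanishes, i.e. every cycle is a boundary. -/
def IsAcyclic (d : A →+ A) : Prop := ∀ x, d x = 0 → ∃ y, d y = x

/-- A dg left ideal: a graded additive subgroup closed under the differential and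
under left multiplication. -/
def IsDGLeftIdeal (𝒜 : ℤ → AddSubgroup A) [GradedRing 𝒜] (d : A →+ A)
    (I : AddSubgroup A) : Prop :=
  (∀ (a : A), ∀ x ∈ I, a * x ∈ I) ∧ (∀ x ∈ I, d x ∈ I) ∧
    (∀ x ∈ I, ∀ i : ℤ, (DirectSum.decompose 𝒜 x i : A) ∈ I)

/-- A dg right ideal. -/
def IsDGRightIdeal (𝒜 : ℤ → AddSubgroup A) [GradedRing 𝒜] (d : A →+ A)
    (I : AddSubgroup A) : Prop :=
  (∀ (a : A), ∀ x ∈ I, x * a ∈ I) ∧ (∀ x ∈ I, d x ∈ I) ∧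
    (∀ x ∈ I, ∀ i : ℤ, (DirectSum.decompose 𝒜 x i : A) ∈ I)

/-- A dg-division ring: the only dg left ideals and the only dg right ideals
are `0` and the whole ring. -/
def IsDGDivisionRing (𝒜 : ℤ → AddSubgroup A) [GradedRing 𝒜] (d : A →+ A) : Prop :=
  (0 : A) ≠ 1 ∧ (∀ I, IsDGLeftIdeal 𝒜 d I → I = ⊥ ∨ I = ⊤) ∧
    (∀ I, IsDGRightIdeal 𝒜 d I → I = ⊥ ∨ I = ⊤)

/-- A graded division ring (gr-field): every nonzero homogeneous element is invertible. -/
def IsGradedDivisionRing (𝒜 : ℤ → AddSubgroup A) : Prop :=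
  (0 : A) ≠ 1 ∧ ∀ (i : ℤ) (x : A), x ∈ 𝒜 i → x ≠ 0 → IsUnit x

/-- The relations defining `B ⊗[A] B` inside `B ⊗[ℤ] B`, for an extension `φ : A →+* B`. -/
def sepRel (φ : A →+* B) : Submodule ℤ (B ⊗[ℤ] B) :=
  Submodule.span ℤ {x | ∃ (b b' : B) (a : A),
    x = (b * φ a) ⊗ₜ[ℤ] b' - b ⊗ₜ[ℤ] (φ a * b')}

/-- The balanced tensor product `B ⊗[A] B` for an extension `φ : A →+* B`. -/
abbrev SepTensor (φ : A →+* B) := (B ⊗[ℤ] B) ⧸ sepRel φ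

/-- The canonical projection `B ⊗[ℤ] B → B ⊗[A] B`. -/
noncomputable def sepMk (φ : A →+* B) : B ⊗[ℤ] B →ₗ[ℤ] SepTensor φ := (sepRel φ).mkQ

/-- The multiplication map `μ : B ⊗[A] B → B`. -/
noncomputable def sepMul (φ : A →+* B) : SepTensor φ →ₗ[ℤ] B :=
  Submodule.liftQ _ (TensorProduct.lift (LinearMap.mul ℤ B)) (by
    rw [sepRel, Submodule.span_le]
    rintro x ⟨b, b', a, rfl⟩
    change TensorProduct.lift (LinearMap.mul ℤ B) _ = 0
    erw [map_sub]
    simp [mul_assoc])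

/-- Left multiplication by `b` on `B ⊗[A] B`. -/
noncomputable def sepLMul (φ : A →+* B) (b : B) : SepTensor φ →ₗ[ℤ] SepTensor φ :=
  Submodule.mapQ _ _ (TensorProduct.map (LinearMap.mulLeft ℤ b) LinearMap.id) (by
    rw [sepRel, Submodule.span_le]
    rintro x ⟨b₀, b', a, rfl⟩
    simp only [SetLike.mem_coe, Submodule.mem_comap, map_sub, TensorProduct.map_tmul,
      LinearMap.mulLeft_apply, LinearMap.id_apply]
    refine Submodule.subset_span ⟨b * b₀, b', a, ?_⟩
    erw [map_sub, TensorProduct.map_tmul, TensorProduct.map_tmul]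
    simp [mul_assoc])

/-- Right multiplication by `b` on `B ⊗[A] B`. -/
noncomputable def sepRMul (φ : A →+* B) (b : B) : SepTensor φ →ₗ[ℤ] SepTensor φ :=
  Submodule.mapQ _ _ (TensorProduct.map LinearMap.id (LinearMap.mulRight ℤ b)) (by
    rw [sepRel, Submodule.span_le]
    rintro x ⟨b₀, b', a, rfl⟩
    simp only [SetLike.mem_coe, Submodule.mem_comap, map_sub, TensorProduct.map_tmul,
      LinearMap.mulRight_apply, LinearMap.id_apply]
    refine Submodule.subset_span ⟨b₀, b' * b, a, ?_⟩
    erw [map_sub, TensorProduct.map_tmul, TensorProduct.map_tmul]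
    simp [mul_assoc])

/-- The grading on `B ⊗[A] B`: the degree `n` part is generated by the classes of
`b ⊗ b'` with `b, b'` homogeneous of degrees summing to `n`. -/
noncomputable def sepGrading (φ : A →+* B) (𝒝 : ℤ → AddSubgroup B) (n : ℤ) :
    AddSubgroup (SepTensor φ) :=
  AddSubgroup.closure {x | ∃ (i j : ℤ) (b b' : B), b ∈ 𝒝 i ∧ b' ∈ 𝒝 j ∧ i + j = n ∧
    x = sepMk φ (b ⊗ₜ[ℤ] b')}

/-- The sign involution `b ↦ (-1)^{|b|} b` of a graded ring. -/
noncomputable def signMap (𝒝 : ℤ → AddSubgroup B) [GradedRing 𝒝] : B →+ B :=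
  (DirectSum.toAddMonoid fun i =>
      (smulAddHom ℤ B ((Int.negOnePow i : ℤ))).comp (𝒝 i).subtype).comp
    (DirectSum.decomposeAddEquiv 𝒝).toAddMonoidHom

lemma signMap_of_mem (𝒝 : ℤ → AddSubgroup B) [GradedRing 𝒝] {i : ℤ} {x : B}
    (hx : x ∈ 𝒝 i) : signMap 𝒝 x = ((Int.negOnePow i : ℤ)) • x := by
  classical
  unfold signMap
  simp only [AddMonoidHom.comp_apply, AddEquiv.coe_toAddMonoidHom,
    DirectSum.decomposeAddEquiv_apply, DirectSum.decompose_of_mem 𝒝 hx,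
    DirectSum.toAddMonoid_of]
  rfl

/-- The differential `d ⊗ 1 + ε ⊗ d` on `B ⊗[ℤ] B` (with Koszul sign). -/
noncomputable def sepDiffPre (𝒝 : ℤ → AddSubgroup B) [GradedRing 𝒝] (dB : B →+ B) :
    B ⊗[ℤ] B →ₗ[ℤ] B ⊗[ℤ] B :=
  TensorProduct.map dB.toIntLinearMap LinearMap.id +
    TensorProduct.map (signMap 𝒝).toIntLinearMap dB.toIntLinearMap

/-- `D` is the differential induced on `B ⊗[A] B` by `d_B ⊗ 1 + ε ⊗ d_B`. -/
def IsSepDiff (φ : A →+* B) (𝒝 : ℤ → AddSubgroup B) [GradedRing 𝒝] (dB : B →+ B)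
    (D : SepTensor φ →+ SepTensor φ) : Prop :=
  ∀ x : B ⊗[ℤ] B, D (sepMk φ x) = sepMk φ (sepDiffPre 𝒝 dB x)

/-- `ρ : B → B ⊗[A] B` is a `B`-`B`-bimodule section of the multiplication map. -/
def IsSepSection (φ : A →+* B) (ρ : B →+ SepTensor φ) : Prop :=
  (∀ b, sepMul φ (ρ b) = b) ∧
    (∀ (b₁ c b₂ : B), ρ (b₁ * c * b₂) = sepLMul φ b₁ (sepRMul φ b₂ (ρ c)))

/-- The extension `φ : A →+* B` is separable: the multiplication map
`B ⊗[A] B → B` splits as a bimodule map. -/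
def IsSeparableExt (φ : A →+* B) : Prop := ∃ ρ : B →+ SepTensor φ, IsSepSection φ ρ

/-- The extension `φ : A →+* B` of graded rings is graded-separable: the multiplication
map `B ⊗[A] B → B` splits as a map of graded bimodules. -/
def IsGrSeparable (φ : A →+* B) (𝒝 : ℤ → AddSubgroup B) : Prop :=
  ∃ ρ : B →+ SepTensor φ, IsSepSection φ ρ ∧
    ∀ (n : ℤ), ∀ b ∈ 𝒝 n, ρ b ∈ sepGrading φ 𝒝 n

/-- The dg-extension `φ : (A,d_A) →  (B,d_B)` is dg-separable: the multiplication map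
`B ⊗[A] B → B` splits as a map of differential graded bimodules. -/
def IsDGSeparable (φ : A →+* B) (𝒝 : ℤ → AddSubgroup B) [GradedRing 𝒝]
    (dB : B →+ B) : Prop :=
  ∃ D : SepTensor φ →+ SepTensor φ, IsSepDiff φ 𝒝 dB D ∧
    ∃ ρ : B →+ SepTensor φ, IsSepSection φ ρ ∧
      (∀ (n : ℤ), ∀ b ∈ 𝒝 n, ρ b ∈ sepGrading φ 𝒝 n) ∧
      (∀ b, D (ρ b) = ρ (dB b))

end DGCore

section Cycles

variable {A : Type} [Ring A] {B : Type} [Ring B]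

lemma IsDGRing.leibniz_total {𝒜 : ℤ → AddSubgroup A} [GradedRing 𝒜] {d : A →+ A}
    (h : IsDGRing 𝒜 d) (a b : A) :
    d (a * b) = d a * b + signMap 𝒜 a * d b := by
  induction a using DirectSum.Decomposition.inductionOn 𝒜 with
  | zero => simp
  | @homogeneous i x =>
      obtain ⟨x, hx⟩ := x
      rw [h.leibniz i x b hx, signMap_of_mem 𝒜 hx, smul_mul_assoc]
  | add a a' ha ha' =>
      rw [add_mul, map_add, ha, ha', map_add, map_add, add_mul, add_mul]
      abel

/-- The subring of cycles `ker d` of a dg-ring `(A, d)`. -/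
def cyclesSubring (𝒜 : ℤ → AddSubgroup A) [GradedRing 𝒜] (d : A →+ A)
    (h : IsDGRing 𝒜 d) : Subring A where
  carrier := {x | d x = 0}
  zero_mem' := map_zero d
  add_mem' := by
    intro x y hx hy
    simp only [Set.mem_setOf_eq] at *
    rw [map_add, hx, hy, add_zero]
  neg_mem' := by
    intro x hx
    simp only [Set.mem_setOf_eq] at *
    rw [map_neg, hx, neg_zero]
  one_mem' := by
    have h2 : d ((1 : A) * 1) = d 1 * 1 + ((Int.negOnePow 0 : ℤ)) • ((1 : A) * d 1) :=
      h.leibniz 0 1 1 (SetLike.one_mem_graded 𝒜)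
    simp only [one_mul, mul_one, Int.negOnePow_zero, Units.val_one, one_smul] at h2
    have h3 : d (1 : A) + 0 = d 1 + d 1 := by rw [add_zero]; exact h2
    exact (add_left_cancel h3).symm
  mul_mem' := by
    intro x y hx hy
    simp only [Set.mem_setOf_eq] at *
    rw [h.leibniz_total x y, hx, hy, zero_mul, mul_zero, add_zero]

/-- The grading on the subring of cycles, inherited from the ambient graded ring. -/
def cyclesGrading (𝒜 : ℤ → AddSubgroup A) [GradedRing 𝒜] (d : A →+ A)
    (h : IsDGRing 𝒜 d) : ℤ → AddSubgroup (cyclesSubring 𝒜 d h) :=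
  fun i => (𝒜 i).comap (cyclesSubring 𝒜 d h).subtype.toAddMonoidHom

end Cycles

section Laurent

/-- The degree-`n` homogeneous part of the Laurent polynomial ring `D[T,T⁻¹]`,
where the variable `T` is placed in degree `e`. -/
noncomputable def lpGrading (D : Type) [CommRing D] (e : ℤ) (n : ℤ) :
    AddSubgroup (LaurentPolynomial D) :=
  AddSubgroup.closure {x | ∃ (c : D) (k : ℤ), k * e = n ∧
    x = LaurentPolynomial.C c * LaurentPolynomial.T k}

end Laurent

section AuxProof

namespace DGAux

variable {A : Type} [Ring A] (𝒜 : ℤ → AddSubgroup A) [GradedRing 𝒜]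

lemma decompose_mul_right_of_mem {i : ℤ} {x : A} (hx : x ∈ 𝒜 i) (b : A) (n : ℤ) :
    (DirectSum.decompose 𝒜 (b * x) n : A) = (DirectSum.decompose 𝒜 b (n - i) : A) * x := by
  induction b using DirectSum.Decomposition.inductionOn 𝒜 with
  | zero => simp
  | @homogeneous j b =>
      obtain ⟨b, hb⟩ := b
      by_cases h : n = j + i
      · subst h
        rw [DirectSum.decompose_of_mem_same 𝒜 (SetLike.mul_mem_graded hb hx),
          show j + i - i = j by ring, DirectSum.decompose_of_mem_same 𝒜 hb]
      · rw [DirectSum.decompose_of_mem_ne 𝒜 (SetLike.mul_mem_graded hb hx) (fun hh => h hh.symm),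
          DirectSum.decompose_of_mem_ne 𝒜 hb (show j ≠ n - i by omega), zero_mul]
  | add a a' ha ha' =>
      rw [add_mul, DirectSum.decompose_add, DirectSum.decompose_add, DirectSum.add_apply,
        DirectSum.add_apply, AddSubgroup.coe_add, AddSubgroup.coe_add, ha, ha', add_mul]

variable {dA : A →+ A}

lemma d_decompose (hA : IsDGRing 𝒜 dA) (x : A) (n : ℤ) :
    dA (DirectSum.decompose 𝒜 x n : A) = (DirectSum.decompose 𝒜 (dA x) (n + 1) : A) := by
  induction x using DirectSum.Decomposition.inductionOn 𝒜 with
  | zero => simp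
  | @homogeneous j y =>
      obtain ⟨y, hy⟩ := y
      by_cases h : j = n
      · subst h
        rw [DirectSum.decompose_of_mem_same 𝒜 hy,
          DirectSum.decompose_of_mem_same 𝒜 (hA.d_mem j y hy)]
      · rw [DirectSum.decompose_of_mem_ne 𝒜 hy h,
          DirectSum.decompose_of_mem_ne 𝒜 (hA.d_mem j y hy) (show j + 1 ≠ n + 1 by omega),
          map_zero]
  | add a a' ha ha' =>
      rw [map_add dA a a', DirectSum.decompose_add, DirectSum.decompose_add,
        DirectSum.add_apply, DirectSum.add_apply, AddSubgroup.coe_add, AddSubgroup.coe_add,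
        map_add, ha, ha']

lemma d_decompose_of_cycle (hA : IsDGRing 𝒜 dA) {x : A} (hx : dA x = 0) (n : ℤ) :
    dA (DirectSum.decompose 𝒜 x n : A) = 0 := by
  rw [d_decompose 𝒜 hA, hx, DirectSum.decompose_zero]
  simp

lemma d_one (hA : IsDGRing 𝒜 dA) : dA (1 : A) = 0 := by
  have h2 : dA ((1 : A) * 1) = dA 1 * 1 + ((Int.negOnePow 0 : ℤ)) • ((1 : A) * dA 1) :=
    hA.leibniz 0 1 1 (SetLike.one_mem_graded 𝒜)
  simp only [one_mul, mul_one, Int.negOnePow_zero, Units.val_one, one_smul] at h2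
  have h3 : dA (1 : A) + 0 = dA 1 + dA 1 := by rw [add_zero]; exact h2
  exact (add_left_cancel h3).symm


lemma exists_homog_inv (hA : IsDGRing 𝒜 dA) (hcomm : IsGradedComm 𝒜)
    (hdiv : IsDGDivisionRing 𝒜 dA) {i : ℤ} {x : A} (hx : x ∈ 𝒜 i) (hdx : dA x = 0)
    (hx0 : x ≠ 0) :
    ∃ y, y ∈ 𝒜 (-i) ∧ dA y = 0 ∧ x * y = 1 ∧ y * x = 1 := by
  classical
  set I : AddSubgroup A := (AddMonoidHom.mulRight x).range with hI
  have hmem : ∀ z, z ∈ I ↔ ∃ b, b * x = z := by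
    intro z; constructor
    · rintro ⟨b, rfl⟩; exact ⟨b, rfl⟩
    · rintro ⟨b, rfl⟩; exact ⟨b, rfl⟩
  have hIdg : IsDGLeftIdeal 𝒜 dA I := by
    refine ⟨?_, ?_, ?_⟩
    · intro a z hz
      obtain ⟨b, rfl⟩ := (hmem z).1 hz
      exact (hmem _).2 ⟨a * b, mul_assoc a b x⟩
    · intro z hz
      obtain ⟨b, rfl⟩ := (hmem z).1 hz
      refine (hmem _).2 ⟨dA b, ?_⟩
      rw [hA.leibniz_total, hdx, mul_zero, add_zero]
    · intro z hz n
      obtain ⟨b, rfl⟩ := (hmem z).1 hz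
      rw [decompose_mul_right_of_mem 𝒜 hx]
      exact (hmem _).2 ⟨_, rfl⟩
  have hItop : I = ⊤ := by
    rcases hdiv.2.1 I hIdg with h | h
    · exfalso
      have : x ∈ I := (hmem x).2 ⟨1, one_mul x⟩
      rw [h, AddSubgroup.mem_bot] at this
      exact hx0 this
    · exact h
  have h1 : (1 : A) ∈ I := by rw [hItop]; trivial
  obtain ⟨u, hu⟩ := (hmem 1).1 h1
  set w : A := (DirectSum.decompose 𝒜 u (-i) : A) with hw
  have hwmem : w ∈ 𝒜 (-i) := SetLike.coe_mem _
  have hwx : w * x = 1 := by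
    have := decompose_mul_right_of_mem 𝒜 hx u 0
    rw [hu, DirectSum.decompose_of_mem_same 𝒜 (SetLike.one_mem_graded 𝒜)] at this
    rw [hw, show (-i : ℤ) = 0 - i from (zero_sub i).symm]
    exact this.symm
  -- x * w = 1
  have hxw : x * w = 1 := by
    have hc : x * w = ((Int.negOnePow (i * -i) : ℤ)) • (w * x) := hcomm i (-i) x w hx hwmem
    rw [hwx] at hc
    rcases Int.units_eq_one_or (Int.negOnePow (i * -i)) with hs | hs
    · rw [hs] at hc; simpa using hc
    · rw [hs] at hc
      have hxw' : x * w = -1 := by simpa using hc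
      have hid : (x * w) * (x * w) = x * w := by
        calc (x * w) * (x * w) = x * ((w * x) * w) := by simp [mul_assoc]
        _ = x * w := by rw [hwx, one_mul]
      rw [hxw'] at hid
      have h11 : (1 : A) = -1 := by simpa using hid
      rw [hxw', ← h11]
  have hdw : dA w = 0 := by
    have hdwx : dA w * x = 0 := by
      have := hA.leibniz_total w x
      rw [hwx, d_one 𝒜 hA, hdx, mul_zero, add_zero] at this
      exact this.symm
    calc dA w = dA w * (x * w) := by rw [hxw, mul_one]
    _ = (dA w * x) * w := by rw [mul_assoc]
    _ = 0 := by rw [hdwx, zero_mul]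
  exact ⟨w, hwmem, hdw, hxw, hwx⟩


lemma mem_zero_of_components (x : A) (h : ∀ n : ℤ, n ≠ 0 → (DirectSum.decompose 𝒜 x n : A) = 0) :
    x ∈ 𝒜 0 := by
  classical
  rw [← DirectSum.sum_support_decompose 𝒜 x]
  refine AddSubgroup.sum_mem _ (fun n _ => ?_)
  by_cases hn : n = 0
  · subst hn; exact SetLike.coe_mem _
  · rw [h n hn]; exact zero_mem _

lemma decompose_finsum {ι : Type} (s : Finset ι) (f : ι → A) (deg : ι → ℤ)
    (h : ∀ j ∈ s, f j ∈ 𝒜 (deg j)) (n : ℤ) :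
    (DirectSum.decompose 𝒜 (∑ j ∈ s, f j) n : A) =
      ∑ j ∈ s, if deg j = n then f j else 0 := by
  classical
  induction s using Finset.induction with
  | empty => simp
  | @insert j s hj ih =>
      rw [Finset.sum_insert hj, Finset.sum_insert hj, DirectSum.decompose_add,
        DirectSum.add_apply, AddSubgroup.coe_add, ih (fun k hk => h k (Finset.mem_insert_of_mem hk))]
      congr 1
      by_cases hd : deg j = n
      · rw [if_pos hd, ← hd, DirectSum.decompose_of_mem_same 𝒜 (h j (Finset.mem_insert_self j s))]
      · rw [if_neg hd, DirectSum.decompose_of_mem_ne 𝒜 (h j (Finset.mem_insert_self j s)) hd]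


lemma decompose_finsum_eq {ι : Type} (s : Finset ι) (f : ι → A) (deg : ι → ℤ)
    (h : ∀ j ∈ s, f j ∈ 𝒜 (deg j))
    (hinj : ∀ j ∈ s, ∀ j' ∈ s, deg j = deg j' → j = j')
    (k : ι) (hk : k ∈ s) :
    (DirectSum.decompose 𝒜 (∑ j ∈ s, f j) (deg k) : A) = f k := by
  classical
  rw [decompose_finsum 𝒜 s f deg h (deg k), Finset.sum_eq_single k]
  · exact if_pos rfl
  · intro j hj hjk
    exact if_neg (fun hje => hjk (hinj j hj k hk hje))
  · intro h'
    exact (h' hk).elim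


def zeroSub (hA : IsDGRing 𝒜 dA) : Subring (cyclesSubring 𝒜 dA hA) where
  carrier := {z | (z : A) ∈ 𝒜 0}
  one_mem' := SetLike.one_mem_graded 𝒜
  mul_mem' := by
    intro a b ha hb
    have ha' : ((a : cyclesSubring 𝒜 dA hA) : A) ∈ 𝒜 0 := ha
    have hb' : ((b : cyclesSubring 𝒜 dA hA) : A) ∈ 𝒜 0 := hb
    have := SetLike.mul_mem_graded ha' hb'
    simpa using this
  zero_mem' := by
    show ((0 : cyclesSubring 𝒜 dA hA) : A) ∈ 𝒜 0
    rw [Subring.coe_zero]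
    exact zero_mem _
  add_mem' := by
    intro a b ha hb
    show ((a + b : cyclesSubring 𝒜 dA hA) : A) ∈ 𝒜 0
    rw [Subring.coe_add]
    exact add_mem ha hb
  neg_mem' := by
    intro a ha
    show ((-a : cyclesSubring 𝒜 dA hA) : A) ∈ 𝒜 0
    rw [Subring.coe_neg]
    exact neg_mem ha

end DGAux

end AuxProof

set_option maxHeartbeats 1000000 in
set_option synthInstance.maxHeartbeats 400000 in
/-- Classification of the cycles of a graded commutative
dg-division algebra (with matching left/right regular homogeneous cycles): `ker d`
is either a field concentrated in degree `0`, or a Laurent polynomial ring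
`K[X,X⁻¹]` over a field `K` with `X` homogeneous of nonzero degree, of even degree
when the characteristic of `K` is not `2`. -/
theorem cycles_of_gradedComm_dgDivision_classification
    {A : Type} [Ring A] (𝒜 : ℤ → AddSubgroup A) [GradedRing 𝒜] (dA : A →+ A)
    (hA : IsDGRing 𝒜 dA)
    (hreg : ∀ (i : ℤ) (x : A), x ∈ 𝒜 i → dA x = 0 →
      ((∀ y, x * y = 0 → y = 0) ↔ (∀ y, y * x = 0 → y = 0)))
    (hcomm : IsGradedComm 𝒜) (hdiv : IsDGDivisionRing 𝒜 dA) :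
    ((∀ x, dA x = 0 → x ∈ 𝒜 0) ∧
      (∀ x y, dA x = 0 → dA y = 0 → x * y = y * x) ∧
      (∀ x, dA x = 0 → x ≠ 0 → ∃ y, dA y = 0 ∧ x * y = 1 ∧ y * x = 1)) ∨
    (∃ (F : Type) (_ : Field F) (e : ℤ), e ≠ 0 ∧ ((2 : F) ≠ 0 → Even e) ∧
      ∃ θ : cyclesSubring 𝒜 dA hA ≃+* LaurentPolynomial F,
        ∀ (n : ℤ) (x : cyclesSubring 𝒜 dA hA),
          (x : A) ∈ 𝒜 n ↔ θ x ∈ lpGrading F e n) := by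
  classical
  have h10 : (1 : A) ≠ 0 := fun h => hdiv.1 h.symm
  -- the support subgroup
  let S : AddSubgroup ℤ :=
    { carrier := {n : ℤ | ∃ x ∈ 𝒜 n, dA x = 0 ∧ x ≠ 0}
      zero_mem' := ⟨1, SetLike.one_mem_graded 𝒜, DGAux.d_one 𝒜 hA, h10⟩
      add_mem' := by
        rintro m n ⟨x, hx, hdx, hx0⟩ ⟨y, hy, hdy, hy0⟩
        refine ⟨x * y, SetLike.mul_mem_graded hx hy, ?_, ?_⟩
        · rw [hA.leibniz_total, hdx, hdy, zero_mul, mul_zero, add_zero]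
        · intro hxy
          obtain ⟨w, _, _, _, hwx⟩ := DGAux.exists_homog_inv 𝒜 hA hcomm hdiv hx hdx hx0
          apply hy0
          calc y = (w * x) * y := by rw [hwx, one_mul]
          _ = w * (x * y) := mul_assoc ..
          _ = 0 := by rw [hxy, mul_zero]
      neg_mem' := by
        rintro n ⟨x, hx, hdx, hx0⟩
        obtain ⟨w, hw, hdw, hxw, _⟩ := DGAux.exists_homog_inv 𝒜 hA hcomm hdiv hx hdx hx0
        refine ⟨w, hw, hdw, fun h => ?_⟩
        rw [h, mul_zero] at hxw
        exact h10 hxw.symm }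
  have hSmem : ∀ n : ℤ, (∃ x ∈ 𝒜 n, dA x = 0 ∧ x ≠ 0) ↔ n ∈ S := fun n => Iff.rfl
  obtain ⟨e, hSe⟩ := Int.subgroup_cyclic S
  have hSiff : ∀ n : ℤ, n ∈ S ↔ ∃ k : ℤ, k * e = n := by
    intro n
    rw [hSe, AddSubgroup.mem_closure_singleton]
    simp [smul_eq_mul]
  by_cases he : e = 0
  · -- degree 0 case
    subst he
    have hS0 : ∀ n : ℤ, n ∈ S → n = 0 := by
      intro n hn
      obtain ⟨k, hk⟩ := (hSiff n).1 hn
      omega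
    have hdeg0 : ∀ x, dA x = 0 → x ∈ 𝒜 0 := by
      intro x hdx
      refine DGAux.mem_zero_of_components 𝒜 x (fun n hn => ?_)
      by_contra hne
      exact hn (hS0 n ((hSmem n).1
        ⟨_, SetLike.coe_mem _, DGAux.d_decompose_of_cycle 𝒜 hA hdx n, hne⟩))
    refine Or.inl ⟨hdeg0, ?_, ?_⟩
    · intro x y hdx hdy
      have := hcomm 0 0 x y (hdeg0 x hdx) (hdeg0 y hdy)
      simpa using this
    · intro x hdx hx0
      obtain ⟨y, _, hdy, hxy, hyx⟩ :=
        DGAux.exists_homog_inv 𝒜 hA hcomm hdiv (hdeg0 x hdx) hdx hx0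
      exact ⟨y, hdy, hxy, hyx⟩
  · -- Laurent case
    have heS : e ∈ S := by rw [hSiff]; exact ⟨1, one_mul e⟩
    obtain ⟨xe, hxe, hdxe, hxe0⟩ := (hSmem e).2 heS
    obtain ⟨ye, hye, hdye, hxye, hyxe⟩ := DGAux.exists_homog_inv 𝒜 hA hcomm hdiv hxe hdxe hxe0
    set R := cyclesSubring 𝒜 dA hA with hR
    have memR : ∀ z : A, z ∈ cyclesSubring 𝒜 dA hA ↔ dA z = 0 := fun z => Iff.rfl
    set X : R := ⟨xe, hdxe⟩ with hX
    set Y : R := ⟨ye, hdye⟩ with hY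
    have hXY : X * Y = 1 := Subtype.ext hxye
    have hYX : Y * X = 1 := Subtype.ext hyxe
    set u : Rˣ := ⟨X, Y, hXY, hYX⟩ with hu
    -- the field of degree-zero cycles
    set Fsub : Subring R := DGAux.zeroSub 𝒜 hA with hFsub
    have memF : ∀ z : R, z ∈ Fsub ↔ (z : A) ∈ 𝒜 0 := fun z => Iff.rfl
    set F := ↥Fsub with hF
    have hfield : IsField F := by
      refine ⟨⟨0, 1, ?_⟩, ?_, ?_⟩
      · intro h
        exact h10 (congrArg (fun z : F => ((z : R) : A)) h).symm
      · intro a b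
        have := hcomm 0 0 ((a:R):A) ((b:R):A) a.2 b.2
        simp only [Int.negOnePow_zero, Units.val_one, one_smul, mul_zero] at this
        apply Subtype.ext
        apply Subtype.ext
        show ((a:R):A) * ((b:R):A) = ((b:R):A) * ((a:R):A)
        exact this
      · intro a ha
        have ha0 : ((a : R) : A) ≠ 0 := by
          intro h
          exact ha (Subtype.ext (Subtype.ext h))
        obtain ⟨y, hy, hdy, hxy, hyx⟩ :=
          DGAux.exists_homog_inv 𝒜 hA hcomm hdiv a.2 (a : R).2 ha0
        refine ⟨⟨⟨y, hdy⟩, by exact hy⟩, ?_⟩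
        exact Subtype.ext (Subtype.ext hxy)
    letI : Field F := hfield.toField
    -- powers of X
    have hupow : ∀ k : ℤ, (((u ^ k : Rˣ) : R) : A) ∈ 𝒜 (k * e) := by
      intro k
      induction k using Int.induction_on with
      | zero => simpa using SetLike.one_mem_graded 𝒜
      | succ k ih =>
          rw [zpow_add_one]
          have hm := SetLike.mul_mem_graded ih hxe
          have hco : ((((u ^ (k:ℤ) * u : Rˣ) : R)) : A) = (((u ^ (k:ℤ) : Rˣ) : R) : A) * xe := rfl
          rw [hco]
          convert hm using 2
          ring
      | pred k ih =>
          rw [show (-(k:ℤ) - 1) = (-(k:ℤ)) + (-1) by ring, zpow_add, zpow_neg_one]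
          have hm := SetLike.mul_mem_graded ih hye
          have hco : ((((u ^ (-(k:ℤ)) * u⁻¹ : Rˣ) : R)) : A)
              = (((u ^ (-(k:ℤ)) : Rˣ) : R) : A) * ye := rfl
          rw [hco]
          convert hm using 2
          ring
    -- the evaluation homomorphism
    set g : Multiplicative ℤ →* R := (Units.coeHom R).comp (zpowersHom Rˣ u) with hg
    have hgapp : ∀ k : Multiplicative ℤ, g k = ((u ^ (Multiplicative.toAdd k) : Rˣ) : R) :=
      fun k => rfl
    have hRcomm : ∀ (i j : ℤ) (a b : R), (a : A) ∈ 𝒜 0 → (b : A) ∈ 𝒜 j → a * b = b * a := by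
      intro i j a b ha hb
      have := hcomm 0 j (a : A) (b : A) ha hb
      simp only [zero_mul, Int.negOnePow_zero, Units.val_one, one_smul] at this
      apply Subtype.ext
      show (a : A) * (b : A) = (b : A) * (a : A)
      exact this
    have hgcom : ∀ (c : F) (k : Multiplicative ℤ), Commute (Fsub.subtype c) (g k) := by
      intro c k
      show Fsub.subtype c * g k = g k * Fsub.subtype c
      rw [hgapp k]
      exact hRcomm 0 (Multiplicative.toAdd k * e) _ _ c.2 (hupow _)
    set ψ : LaurentPolynomial F →+* R := AddMonoidAlgebra.liftNCRingHom Fsub.subtype g hgcom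
      with hψ
    have hψsingle : ∀ (k : ℤ) (c : F),
        ψ (AddMonoidAlgebra.single k c) = ((c : R)) * ((u ^ k : Rˣ) : R) := by
      intro k c
      rw [hψ]
      show AddMonoidAlgebra.liftNC (Fsub.subtype : F →+ R) g (AddMonoidAlgebra.single k c) = _
      rw [AddMonoidAlgebra.liftNC_single]
      rfl
    -- inverse powers multiply to one
    have hpowinv : ∀ k : ℤ, (((u ^ k : Rˣ) : R) : A) * (((u ^ (-k) : Rˣ) : R) : A) = 1 := by
      intro k
      have h1 : ((u ^ k * u ^ (-k) : Rˣ) : R) = 1 := by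
        rw [← zpow_add]
        simp
      calc (((u ^ k : Rˣ) : R) : A) * (((u ^ (-k) : Rˣ) : R) : A)
          = (((u ^ k * u ^ (-k) : Rˣ) : R) : A) := rfl
      _ = ((1 : R) : A) := by rw [h1]
      _ = 1 := rfl
    have hcancel : ∀ (c : F) (k : ℤ), ((c : R) : A) * (((u ^ k : Rˣ) : R) : A) = 0 → c = 0 := by
      intro c k h
      have hc : ((c : R) : A) = 0 := by
        calc ((c : R) : A) = ((c : R) : A) * ((((u ^ k : Rˣ) : R) : A) *
              (((u ^ (-k) : Rˣ) : R) : A)) := by rw [hpowinv, mul_one]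
        _ = (((c : R) : A) * (((u ^ k : Rˣ) : R) : A)) * (((u ^ (-k) : Rˣ) : R) : A) := by
              rw [mul_assoc]
        _ = 0 := by rw [h, zero_mul]
      exact Subtype.ext (Subtype.ext hc)
    -- surjectivity
    have hsurj : Function.Surjective ψ := by
      intro z
      set G0 : LaurentPolynomial F →+ A :=
        ((cyclesSubring 𝒜 dA hA).subtype.toAddMonoidHom.comp ψ.toAddMonoidHom) with hG0
      have hG0app : ∀ p, G0 p = ((ψ p : R) : A) := fun p => rfl
      have hhom : ∀ (n : ℤ) (a : A), a ∈ 𝒜 n → dA a = 0 → a ∈ G0.range := by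
        intro n a han hda
        by_cases ha0 : a = 0
        · subst ha0; exact zero_mem _
        · obtain ⟨k, hk⟩ := (hSiff n).1 ((hSmem n).1 ⟨a, han, hda, ha0⟩)
          set b : A := (((u ^ (-k) : Rˣ) : R) : A) with hb
          have hbmem : b ∈ 𝒜 (-k * e) := hupow (-k)
          have hcmem : a * b ∈ 𝒜 0 := by
            have := SetLike.mul_mem_graded han hbmem
            convert this using 2
            rw [← hk]; ring
          have hdb : dA b = 0 := ((u ^ (-k) : Rˣ) : R).2
          have hdc : dA (a * b) = 0 := by
            rw [hA.leibniz_total, hda, hdb, zero_mul, mul_zero, add_zero]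
          refine ⟨AddMonoidAlgebra.single k ⟨⟨a * b, hdc⟩, hcmem⟩, ?_⟩
          rw [hG0app, hψsingle]
          show ((a * b) * (((u ^ k : Rˣ) : R) : A)) = a
          have : b * (((u ^ k : Rˣ) : R) : A) = 1 := by
            have h := hpowinv (-k)
            rw [neg_neg] at h
            exact h
          rw [mul_assoc, this, mul_one]
      have hz : (z : A) ∈ G0.range := by
        rw [← DirectSum.sum_support_decompose 𝒜 (z : A)]
        exact AddSubgroup.sum_mem _ (fun n _ => hhom n _ (SetLike.coe_mem _)
          (DGAux.d_decompose_of_cycle 𝒜 hA z.2 n))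
      obtain ⟨p, hp⟩ := hz
      exact ⟨p, Subtype.ext hp⟩
    -- expansion of ψ as a sum of homogeneous terms
    have hsum : ∀ p : LaurentPolynomial F, ((ψ p : R) : A) =
        ∑ k ∈ p.coeff.support, ((p.coeff k : R) : A) * (((u ^ k : Rˣ) : R) : A) := by
      intro p
      conv_lhs => rw [← AddMonoidAlgebra.sum_coeff_single p, Finsupp.sum, map_sum]
      rw [show ((((∑ k ∈ p.coeff.support, ψ (AddMonoidAlgebra.single k (p.coeff k)) : R)) : A))
          = ∑ k ∈ p.coeff.support, ((ψ (AddMonoidAlgebra.single k (p.coeff k)) : R) : A) by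
        exact map_sum ((cyclesSubring 𝒜 dA hA).subtype) _ _]
      exact Finset.sum_congr rfl (fun k _ => by rw [hψsingle]; rfl)
    have hterm : ∀ (p : LaurentPolynomial F) (k : ℤ),
        ((p.coeff k : R) : A) * (((u ^ k : Rˣ) : R) : A) ∈ 𝒜 (k * e) := by
      intro p k
      have := SetLike.mul_mem_graded (p.coeff k).2 (hupow k)
      simpa using this
    have hkey : ∀ (p : LaurentPolynomial F) (k : ℤ), k ∈ p.coeff.support →
        (DirectSum.decompose 𝒜 ((ψ p : R) : A) (k * e) : A) =
          ((p.coeff k : R) : A) * (((u ^ k : Rˣ) : R) : A) := by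
      intro p k hk
      rw [hsum]
      exact DGAux.decompose_finsum_eq 𝒜 _ _ (fun k => k * e) (fun j _ => hterm p j)
        (fun j _ j' _ hje => mul_right_cancel₀ he hje) k hk
    -- injectivity
    have hinj : Function.Injective ψ := by
      rw [injective_iff_map_eq_zero]
      intro p hp
      refine AddMonoidAlgebra.coeff_injective (Finsupp.ext fun k => ?_)
      rw [AddMonoidAlgebra.coeff_zero, Finsupp.zero_apply]
      by_cases hk : k ∈ p.coeff.support
      · have h0 : (DirectSum.decompose 𝒜 ((ψ p : R) : A) (k * e) : A) = 0 := by
          rw [hp]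
          show (DirectSum.decompose 𝒜 (((0 : R)) : A) (k * e) : A) = 0
          rw [show ((0 : R) : A) = 0 from rfl, DirectSum.decompose_zero]
          rfl
        rw [hkey p k hk] at h0
        exact hcancel _ _ h0
      · exact Finsupp.notMem_support_iff.1 hk
    -- grading correspondence
    have hgrade : ∀ (n : ℤ) (p : LaurentPolynomial F),
        ((ψ p : R) : A) ∈ 𝒜 n ↔ p ∈ lpGrading F e n := by
      intro n p
      constructor
      · intro hmem
        have hsupp : ∀ k ∈ p.coeff.support, k * e = n := by
          intro k hk
          by_contra hkn
          have h0 : (DirectSum.decompose 𝒜 ((ψ p : R) : A) (k * e) : A) = 0 := by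
            rw [DirectSum.decompose_of_mem_ne 𝒜 hmem (fun h => hkn h.symm)]
          rw [hkey p k hk] at h0
          exact (Finsupp.notMem_support_iff.2 (hcancel _ _ h0)) hk
        have : p = ∑ k ∈ p.coeff.support, AddMonoidAlgebra.single k (p.coeff k) := by
          conv_lhs => rw [← AddMonoidAlgebra.sum_coeff_single p, Finsupp.sum]
        rw [this]
        refine AddSubgroup.sum_mem _ (fun k hk => AddSubgroup.subset_closure ?_)
        exact ⟨p.coeff k, k, hsupp k hk, (LaurentPolynomial.single_eq_C_mul_T (p.coeff k) k)⟩
      · intro hp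
        refine AddSubgroup.closure_induction ?_ ?_ ?_ ?_ hp
        · rintro q ⟨c, k, hke, rfl⟩
          rw [← LaurentPolynomial.single_eq_C_mul_T, hψsingle]
          have := SetLike.mul_mem_graded c.2 (hupow k)
          show ((c : R) : A) * (((u ^ k : Rˣ) : R) : A) ∈ 𝒜 n
          rw [← hke]
          simpa using this
        · rw [map_zero]
          show ((0 : R) : A) ∈ 𝒜 n
          exact zero_mem _
        · intro q q' _ _ hq hq'
          rw [map_add]
          show ((ψ q + ψ q' : R) : A) ∈ 𝒜 n
          rw [Subring.coe_add]
          exact add_mem hq hq'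
        · intro q _ hq
          rw [map_neg]
          show ((-(ψ q) : R) : A) ∈ 𝒜 n
          rw [Subring.coe_neg]
          exact neg_mem hq
    -- evenness
    have heven : (2 : F) ≠ 0 → Even e := by
      intro h2
      by_contra hodd
      have hoe : Odd e := Int.not_even_iff_odd.1 hodd
      have hcx := hcomm e e xe xe hxe hxe
      rw [Int.negOnePow_odd _ (hoe.mul hoe)] at hcx
      have hx2 : xe * xe = -(xe * xe) := by simpa using hcx
      have e1 : (xe * xe) * (ye * ye) = 1 := by
        rw [show (xe * xe) * (ye * ye) = xe * ((xe * ye) * ye) by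
          rw [mul_assoc, mul_assoc], hxye, one_mul, hxye]
      have e2 : (xe * xe) * (ye * ye) = -1 := by
        rw [hx2, neg_mul, e1]
      have h11 : (1 : A) + 1 = 0 := by
        nth_rewrite 2 [e1.symm.trans e2]
        exact add_neg_cancel 1
      apply h2
      apply Subtype.ext
      apply Subtype.ext
      show (((2 : F) : R) : A) = (((0 : F) : R) : A)
      have hc2 : (((2 : F) : R) : A) = 1 + 1 := by norm_cast
      have hc0 : (((0 : F) : R) : A) = 0 := by norm_cast
      rw [hc2, hc0, h11]
    -- conclusion
    set θ : R ≃+* LaurentPolynomial F := (RingEquiv.ofBijective ψ ⟨hinj, hsurj⟩).symm with hθ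
    refine Or.inr ⟨F, inferInstance, e, he, heven, θ, ?_⟩
    intro n x
    have hx : ψ (θ x) = x := by
      have := (RingEquiv.ofBijective ψ ⟨hinj, hsurj⟩).apply_symm_apply x
      exact this
    rw [← hgrade n (θ x), hx]
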